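/- (Deterministic EF21 convergence, PL case.) In the setting of deterministic EF21, assume additionally that f satisfies the Polyak–Lojasiewicz condition f(x) - f(x*) ≤ (1/(2μ))||∇f(x)||² for all x, where x* minimizes f and μ > 0. Set θ = 1 - √(1-α), β = (1-α)/(1-√(1-α)), and pick stepsize 0 < γ ≤ min{ (L + L̃√(2β/θ))^{-1}, θ/(2μ) }. Define the Lyapunov function Ψ^t = f(x^t) - f(x*) + (γ/θ) G^t with G^t = (1/n)Σ_i ||g_i^t - ∇f_i(x^t)||². Then Ψ^T ≤ (1 - γμ)^T Ψ^0 for all T ≥ 0. -/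

import Mathlib

set_option maxHeartbeats 1000000

open InnerProductSpace

section aux

variable {E : Type*} [NormedAddCommGroup E] [InnerProductSpace ℝ E] [CompleteSpace E]

private lemma EF21_line_deriv {F : E → ℝ} (hdiff : Differentiable ℝ F) (a v : E) (t : ℝ) :
    HasDerivAt (fun s : ℝ => F (a + s • v)) ⟪gradient F (a + t • v), v⟫_ℝ t := by
  have hline : HasDerivAt (fun s : ℝ => a + s • v) v t := by
    simpa using (hasDerivAt_id t).smul_const v |>.const_add a
  have hF := (hdiff (a + t • v)).hasFDerivAt
  have h := hF.comp_hasDerivAt t hline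
  refine h.congr_deriv ?_
  symm
  show ⟪(toDual ℝ E).symm (fderiv ℝ F (a + t • v)), v⟫_ℝ = _
  rw [InnerProductSpace.toDual_symm_apply]

private lemma EF21_descent {F : E → ℝ} (hdiff : Differentiable ℝ F) {Lf : ℝ} (hL : 0 ≤ Lf)
    (hlip : ∀ x y, ‖gradient F x - gradient F y‖ ≤ Lf * ‖x - y‖) (x y : E) :
    F y ≤ F x + ⟪gradient F x, y - x⟫_ℝ + Lf / 2 * ‖y - x‖ ^ 2 := by
  set v := y - x with hv
  have hgradcont : Continuous (fun z => gradient F z) := by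
    have : LipschitzWith (Real.toNNReal Lf) (fun z => gradient F z) := by
      apply LipschitzWith.of_dist_le_mul
      intro a b
      rw [dist_eq_norm, dist_eq_norm]
      calc ‖gradient F a - gradient F b‖ ≤ Lf * ‖a - b‖ := hlip a b
        _ = (Real.toNNReal Lf : ℝ) * ‖a - b‖ := by rw [Real.coe_toNNReal _ hL]
    exact this.continuous
  have hDcont : Continuous (fun t : ℝ => ⟪gradient F (x + t • v), v⟫_ℝ) := by
    apply Continuous.inner
    · exact hgradcont.comp (by continuity)
    · exact continuous_const
  have hint : F y - F x = ∫ t in (0:ℝ)..1, ⟪gradient F (x + t • v), v⟫_ℝ := by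
    have := intervalIntegral.integral_eq_sub_of_hasDerivAt
      (f := fun s : ℝ => F (x + s • v))
      (f' := fun t : ℝ => ⟪gradient F (x + t • v), v⟫_ℝ)
      (a := 0) (b := 1)
      (fun t _ => EF21_line_deriv hdiff x v t)
      (hDcont.intervalIntegrable 0 1)
    simp only [one_smul, zero_smul, add_zero] at this
    have hxy : x + v = y := by rw [hv]; abel
    rw [hxy] at this
    exact this.symm
  have hbound : ∀ t ∈ Set.Icc (0:ℝ) 1,
      ⟪gradient F (x + t • v), v⟫_ℝ ≤ ⟪gradient F x, v⟫_ℝ + Lf * ‖v‖ ^ 2 * t := by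
    intro t ht
    have h1 : ⟪gradient F (x + t • v), v⟫_ℝ - ⟪gradient F x, v⟫_ℝ
        = ⟪gradient F (x + t • v) - gradient F x, v⟫_ℝ := by rw [inner_sub_left]
    have h2 : ⟪gradient F (x + t • v) - gradient F x, v⟫_ℝ
        ≤ ‖gradient F (x + t • v) - gradient F x‖ * ‖v‖ := real_inner_le_norm _ _
    have h3 : ‖gradient F (x + t • v) - gradient F x‖ ≤ Lf * (t * ‖v‖) := by
      have := hlip (x + t • v) x
      simpa [norm_smul, abs_of_nonneg ht.1] using this
    nlinarith [norm_nonneg v, ht.1]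
  have hintle : (∫ t in (0:ℝ)..1, ⟪gradient F (x + t • v), v⟫_ℝ)
      ≤ ∫ t in (0:ℝ)..1, (⟪gradient F x, v⟫_ℝ + Lf * ‖v‖ ^ 2 * t) := by
    apply intervalIntegral.integral_mono_on (by norm_num)
      (hDcont.intervalIntegrable 0 1)
      (Continuous.intervalIntegrable (by continuity) 0 1)
    exact hbound
  have hcalc : (∫ t in (0:ℝ)..1, (⟪gradient F x, v⟫_ℝ + Lf * ‖v‖ ^ 2 * t))
      = ⟪gradient F x, v⟫_ℝ + Lf / 2 * ‖v‖ ^ 2 := by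
    rw [intervalIntegral.integral_add (intervalIntegrable_const)
      ((intervalIntegral.intervalIntegrable_id).const_mul _)]
    rw [intervalIntegral.integral_const_mul, integral_id]
    simp
    ring
  linarith [hint ▸ (hintle.trans_eq hcalc)]

private lemma EF21_grad_avg {n : ℕ} (f : Fin n → E → ℝ) (hdiff : ∀ i, Differentiable ℝ (f i))
    (F : E → ℝ) (hF : ∀ x, F x = (1 / (n : ℝ)) * ∑ i, f i x) (x : E) :
    gradient F x = (1 / (n : ℝ)) • ∑ i, gradient (f i) x := by
  have hFfun : F = fun y => (1 / (n : ℝ)) * ∑ i, f i y := funext hF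
  have hsum : DifferentiableAt ℝ (fun y => ∑ i, f i y) x :=
    DifferentiableAt.fun_sum (fun i _ => (hdiff i x))
  have hfd : fderiv ℝ F x = (1 / (n : ℝ)) • ∑ i, fderiv ℝ (f i) x := by
    rw [hFfun, fderiv_const_mul hsum, fderiv_fun_sum (fun i _ => (hdiff i x))]
  unfold gradient
  rw [hfd, map_smul, map_sum]

private lemma EF21_jensen {n : ℕ} (hn : 0 < n) (v : Fin n → E) :
    ‖(1 / (n : ℝ)) • ∑ i, v i‖ ^ 2 ≤ (1 / (n : ℝ)) * ∑ i, ‖v i‖ ^ 2 := by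
  have hnR : (0:ℝ) < n := Nat.cast_pos.mpr hn
  have h1 : ‖∑ i, v i‖ ≤ ∑ i, ‖v i‖ := norm_sum_le _ _
  have h2 : (∑ i, ‖v i‖) ^ 2 ≤ (n : ℝ) * ∑ i, ‖v i‖ ^ 2 := by
    have := sq_sum_le_card_mul_sum_sq (s := Finset.univ) (f := fun i : Fin n => ‖v i‖)
    simpa using this
  have h3 : ‖∑ i, v i‖ ^ 2 ≤ (n : ℝ) * ∑ i, ‖v i‖ ^ 2 :=
    le_trans (pow_le_pow_left₀ (norm_nonneg _) h1 2) h2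
  rw [norm_smul]
  have h4 : ‖(1 / (n:ℝ))‖ = 1 / (n:ℝ) := by
    rw [Real.norm_eq_abs, abs_of_pos (by positivity)]
  rw [h4, mul_pow]
  calc (1 / (n:ℝ)) ^ 2 * ‖∑ i, v i‖ ^ 2 ≤ (1 / (n:ℝ)) ^ 2 * ((n:ℝ) * ∑ i, ‖v i‖ ^ 2) := by
        apply mul_le_mul_of_nonneg_left h3 (by positivity)
    _ = (1 / (n:ℝ)) * ∑ i, ‖v i‖ ^ 2 := by field_simp

end aux

/-- Deterministic EF21 convergence under the Polyak–Łojasiewicz condition. -/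
theorem EF21_PL {d n : ℕ} (hn : 0 < n)
    (f : Fin n → EuclideanSpace ℝ (Fin d) → ℝ) (L : Fin n → ℝ) (Lf : ℝ)
    (hdiff : ∀ i, Differentiable ℝ (f i))
    (hlip : ∀ i x y, ‖gradient (f i) x - gradient (f i) y‖ ≤ L i * ‖x - y‖)
    (F : EuclideanSpace ℝ (Fin d) → ℝ)
    (hF : ∀ x, F x = (1 / (n : ℝ)) * ∑ i, f i x)
    (hFdiff : Differentiable ℝ F)
    (hFlip : ∀ x y, ‖gradient F x - gradient F y‖ ≤ Lf * ‖x - y‖)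
    (xstar : EuclideanSpace ℝ (Fin d)) (hmin : ∀ x, F xstar ≤ F x)
    (μ : ℝ) (hμ : 0 < μ)
    (hPL : ∀ x, F x - F xstar ≤ (1 / (2 * μ)) * ‖gradient F x‖ ^ 2)
    (C : EuclideanSpace ℝ (Fin d) → EuclideanSpace ℝ (Fin d)) (α : ℝ)
    (hα0 : 0 < α) (hα1 : α < 1)
    (hC : ∀ x, ‖C x - x‖ ^ 2 ≤ (1 - α) * ‖x‖ ^ 2)
    (θ β Lt : ℝ)
    (hθ : θ = 1 - Real.sqrt (1 - α))
    (hβ : β = (1 - α) / (1 - Real.sqrt (1 - α)))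
    (hLt : Lt = Real.sqrt ((1 / (n : ℝ)) * ∑ i, (L i) ^ 2))
    (γ : ℝ) (hγ0 : 0 < γ)
    (hγ : γ ≤ min (Lf + Lt * Real.sqrt (2 * β / θ))⁻¹ (θ / (2 * μ)))
    (x : ℕ → EuclideanSpace ℝ (Fin d)) (g : Fin n → ℕ → EuclideanSpace ℝ (Fin d))
    (hx : ∀ t, x (t + 1) = x t - γ • ((1 / (n : ℝ)) • ∑ i, g i t))
    (hg : ∀ i t, g i (t + 1) = g i t + C (gradient (f i) (x (t + 1)) - g i t))
    (Ψ : ℕ → ℝ)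
    (hΨ : ∀ t, Ψ t = F (x t) - F xstar
        + (γ / θ) * ((1 / (n : ℝ)) * ∑ i, ‖g i t - gradient (f i) (x t)‖ ^ 2)) :
    ∀ T : ℕ, Ψ T ≤ (1 - γ * μ) ^ T * Ψ 0 := by
  -- trivial case `d = 0`
  rcases Nat.eq_zero_or_pos d with hd | hd
  · subst hd
    have hsub : ∀ a b : EuclideanSpace ℝ (Fin 0), a = b := by
      intro a b; ext i; exact i.elim0
    have hΨ0 : ∀ t, Ψ t = 0 := by
      intro t
      have hz : ∀ i ∈ Finset.univ, ‖g i t - gradient (f i) (x t)‖ ^ 2 = 0 := fun i _ => by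
        rw [hsub (g i t - gradient (f i) (x t)) 0, norm_zero]
        norm_num
      rw [hΨ t, Finset.sum_eq_zero hz, hsub (x t) xstar]
      ring
    intro T
    rw [hΨ0 T, hΨ0 0, mul_zero]
  -- main case `0 < d`
  -- nonnegativity of the Lipschitz constants
  have hepts : ∃ a b : EuclideanSpace ℝ (Fin d), ‖a - b‖ = 1 := by
    refine ⟨EuclideanSpace.single ⟨0, hd⟩ (1:ℝ), 0, ?_⟩
    rw [sub_zero, EuclideanSpace.norm_single, norm_one]
  obtain ⟨a₀, b₀, hab⟩ := hepts
  have hLf0 : 0 ≤ Lf := by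
    have h := hFlip a₀ b₀
    rw [hab, mul_one] at h
    exact le_trans (norm_nonneg _) h
  have hLi0 : ∀ i, 0 ≤ L i := by
    intro i
    have h := hlip i a₀ b₀
    rw [hab, mul_one] at h
    exact le_trans (norm_nonneg _) h
  -- basic scalar facts
  set r := Real.sqrt (1 - α) with hrdef
  have h1α : 0 < 1 - α := by linarith
  have hr0 : 0 < r := Real.sqrt_pos.mpr h1α
  have hr2 : r ^ 2 = 1 - α := Real.sq_sqrt h1α.le
  have hr1 : r < 1 := by
    have h := Real.sqrt_lt_sqrt (by linarith : (0:ℝ) ≤ 1 - α) (by linarith : 1 - α < 1)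
    rwa [Real.sqrt_one] at h
  have hθpos : 0 < θ := by rw [hθ]; linarith
  have hθ1 : θ < 1 := by rw [hθ]; linarith
  have hrθ : r = 1 - θ := by rw [hθ]; ring
  have hβθ : β = (1 - α) / θ := by rw [hβ, hθ]
  have hβpos : 0 < β := by rw [hβθ]; positivity
  have hβr : β * θ = 1 - α := by rw [hβθ]; field_simp
  have hLt0 : 0 ≤ Lt := hLt ▸ Real.sqrt_nonneg _
  have hnR : (0:ℝ) < n := Nat.cast_pos.mpr hn
  have hLt2 : Lt ^ 2 = (1 / (n:ℝ)) * ∑ i, (L i) ^ 2 := by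
    rw [hLt]
    exact Real.sq_sqrt (by positivity)
  -- stepsize conditions
  have hγ1 : γ ≤ (Lf + Lt * Real.sqrt (2 * β / θ))⁻¹ := le_trans hγ (min_le_left _ _)
  have hγ2 : γ ≤ θ / (2 * μ) := le_trans hγ (min_le_right _ _)
  have hγμ : γ * μ ≤ θ / 2 := by
    have h := (le_div_iff₀ (by positivity : (0:ℝ) < 2 * μ)).mp hγ2
    linarith only [h]
  set s := Real.sqrt (2 * β / θ) with hsdef
  have hs0 : 0 ≤ s := Real.sqrt_nonneg _
  have hs2 : s ^ 2 = 2 * β / θ := Real.sq_sqrt (by positivity)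
  have hs2' : s ^ 2 * θ = 2 * β := by rw [hs2]; field_simp
  have hK : 0 < Lf + Lt * s := by
    by_contra h
    push_neg at h
    have : (Lf + Lt * s)⁻¹ ≤ 0 := inv_nonpos.mpr h
    linarith
  have hγK : γ * (Lf + Lt * s) ≤ 1 := by
    have h := mul_le_mul_of_nonneg_right hγ1 hK.le
    rwa [inv_mul_cancel₀ hK.ne'] at h
  have hstep : γ * Lf * θ + 2 * γ ^ 2 * β * Lt ^ 2 ≤ θ := by
    have hb : 0 ≤ γ * (Lt * s) := by positivity
    have ha : 0 ≤ γ * Lf := by positivity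
    have hab2 : γ * Lf + γ * (Lt * s) ≤ 1 := by
      have h' : γ * (Lf + Lt * s) = γ * Lf + γ * (Lt * s) := by ring
      linarith only [hγK, h']
    have h2b : 2 * γ ^ 2 * β * Lt ^ 2 = θ * (γ * (Lt * s)) ^ 2 := by
      linear_combination (-(γ ^ 2 * Lt ^ 2)) * hs2'
    have hb1 : (γ * (Lt * s)) ^ 2 ≤ γ * (Lt * s) := by
      have hble : γ * (Lt * s) ≤ 1 := by linarith
      calc (γ * (Lt * s)) ^ 2 = (γ * (Lt * s)) * (γ * (Lt * s)) := sq (γ * (Lt * s))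
        _ ≤ 1 * (γ * (Lt * s)) := mul_le_mul_of_nonneg_right hble hb
        _ = γ * (Lt * s) := one_mul _
    rw [h2b]
    have k1 := mul_le_mul_of_nonneg_left hb1 hθpos.le
    have k2 := mul_le_mul_of_nonneg_left hab2 hθpos.le
    linarith only [k1, k2]
  -- one–step inequality
  have key : ∀ t, Ψ (t + 1) ≤ (1 - γ * μ) * Ψ t := by
    intro t
    set gb := (1 / (n:ℝ)) • ∑ i, g i t with hgb
    set Eb := ‖gb‖ ^ 2 with hEb
    set G0 := (1 / (n:ℝ)) * ∑ i, ‖g i t - gradient (f i) (x t)‖ ^ 2 with hG0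
    set G1 := (1 / (n:ℝ)) * ∑ i, ‖g i (t+1) - gradient (f i) (x (t+1))‖ ^ 2 with hG1
    set N := ‖gradient F (x t)‖ ^ 2 with hN
    have hG0nn : 0 ≤ G0 := by
      rw [hG0]
      exact mul_nonneg (by positivity) (Finset.sum_nonneg fun i _ => sq_nonneg _)
    have hEbnn : 0 ≤ Eb := by rw [hEb]; exact sq_nonneg _
    have hx1 : x (t+1) - x t = -(γ • gb) := by rw [hx t]; abel
    have hxnorm : ‖x (t+1) - x t‖ = γ * ‖gb‖ := by
      rw [hx1, norm_neg, norm_smul, Real.norm_eq_abs, abs_of_pos hγ0]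
    -- descent step
    have hdesc : F (x (t+1)) ≤ F (x t) - γ/2 * N - γ/2 * Eb + γ/2 * G0
        + Lf/2 * (γ^2 * Eb) := by
      have hd1 := EF21_descent hFdiff hLf0 hFlip (x t) (x (t+1))
      rw [hx1, inner_neg_right, real_inner_smul_right] at hd1
      have hnorm2 : ‖-(γ • gb)‖ ^ 2 = γ ^ 2 * Eb := by
        rw [norm_neg, norm_smul, Real.norm_eq_abs, abs_of_pos hγ0, mul_pow, hEb]
      rw [hnorm2] at hd1
      have hip : 2 * ⟪gradient F (x t), gb⟫_ℝ = N + Eb - ‖gradient F (x t) - gb‖ ^ 2 := by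
        have := norm_sub_sq_real (gradient F (x t)) gb
        rw [hN, hEb]; linarith
      have hgrad : gradient F (x t) = (1 / (n:ℝ)) • ∑ i, gradient (f i) (x t) :=
        EF21_grad_avg f hdiff F hF (x t)
      have hW : ‖gradient F (x t) - gb‖ ^ 2 ≤ G0 := by
        have hdiffv : gradient F (x t) - gb
            = (1 / (n:ℝ)) • ∑ i, (gradient (f i) (x t) - g i t) := by
          rw [hgrad, hgb, ← smul_sub, ← Finset.sum_sub_distrib]
        rw [hdiffv]
        refine (EF21_jensen hn _).trans (le_of_eq ?_)
        rw [hG0]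
        congr 1
        exact Finset.sum_congr rfl (fun i _ => by rw [norm_sub_rev])
      have hW2 : γ/2 * ‖gradient F (x t) - gb‖ ^ 2 ≤ γ/2 * G0 :=
        mul_le_mul_of_nonneg_left hW (by positivity)
      have hip2 : γ * ⟪gradient F (x t), gb⟫_ℝ
          = γ/2 * N + γ/2 * Eb - γ/2 * ‖gradient F (x t) - gb‖ ^ 2 := by
        linear_combination (γ/2) * hip
      linarith only [hd1, hip2, hW2]
    -- contraction step
    have hcontr_i : ∀ i : Fin n, ‖g i (t+1) - gradient (f i) (x (t+1))‖ ^ 2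
        ≤ (1 - θ) * ‖g i t - gradient (f i) (x t)‖ ^ 2 + β * (L i)^2 * (γ^2 * Eb) := by
      intro i
      set u := gradient (f i) (x (t+1)) - g i t with hu
      have hgi : g i (t+1) - gradient (f i) (x (t+1)) = C u - u := by
        rw [hg i t, hu]; abel
      have h1 : ‖C u - u‖ ^ 2 ≤ (1 - α) * ‖u‖ ^ 2 := hC u
      set a := ‖g i t - gradient (f i) (x t)‖ with hadef
      set b := L i * (γ * ‖gb‖) with hbdef
      have hann : 0 ≤ a := norm_nonneg _
      have hbnn : 0 ≤ b := by
        rw [hbdef]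
        exact mul_nonneg (hLi0 i) (by positivity)
      have h2 : ‖u‖ ≤ b + a := by
        have hsplit : ‖u‖ ≤ ‖gradient (f i) (x (t+1)) - gradient (f i) (x t)‖
            + ‖gradient (f i) (x t) - g i t‖ := by
          rw [hu]
          have : gradient (f i) (x (t+1)) - g i t
              = (gradient (f i) (x (t+1)) - gradient (f i) (x t))
                + (gradient (f i) (x t) - g i t) := by abel
          rw [this]
          exact norm_add_le _ _
        have hl := hlip i (x (t+1)) (x t)
        rw [hxnorm] at hl
        have hrev : ‖gradient (f i) (x t) - g i t‖ = a := by
          rw [hadef, norm_sub_rev]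
        rw [hrev] at hsplit
        rw [hbdef]
        calc ‖u‖ ≤ ‖gradient (f i) (x (t+1)) - gradient (f i) (x t)‖ + a := hsplit
          _ ≤ L i * (γ * ‖gb‖) + a := by linarith
      have h3 : ‖u‖ ^ 2 ≤ (b + a) ^ 2 := pow_le_pow_left₀ (norm_nonneg u) h2 2
      -- key polynomial inequality
      have hβb : β * (1 - r) * b ^ 2 = r ^ 2 * b ^ 2 := by
        have hβr' : β * (1 - r) = r ^ 2 := by
          rw [hr2, show (1:ℝ) - r = θ by rw [hrθ]; ring]
          exact hβr
        linear_combination b ^ 2 * hβr'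
      have h4 : r ^ 2 * (b + a) ^ 2 * (1 - r) ≤ (r * a ^ 2 + β * b ^ 2) * (1 - r) := by
        linarith only [mul_nonneg hr0.le (sq_nonneg ((1 - r) * a - r * b)), hβb]
      have h5 : (1 - α) * (b + a) ^ 2 ≤ r * a ^ 2 + β * b ^ 2 := by
        rw [← hr2]
        exact le_of_mul_le_mul_right h4 (by linarith)
      have hfin : ‖C u - u‖ ^ 2 ≤ r * a ^ 2 + β * b ^ 2 := by
        calc ‖C u - u‖ ^ 2 ≤ (1 - α) * ‖u‖ ^ 2 := h1
          _ ≤ (1 - α) * (b + a) ^ 2 := mul_le_mul_of_nonneg_left h3 h1α.le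
          _ ≤ r * a ^ 2 + β * b ^ 2 := h5
      rw [hgi]
      have hbsq : b ^ 2 = (L i)^2 * (γ^2 * Eb) := by
        rw [hbdef, hEb]; ring
      rw [hadef] at hfin
      calc ‖C u - u‖ ^ 2 ≤ r * ‖g i t - gradient (f i) (x t)‖ ^ 2 + β * b ^ 2 := hfin
        _ = (1 - θ) * ‖g i t - gradient (f i) (x t)‖ ^ 2 + β * (L i)^2 * (γ^2 * Eb) := by
            rw [hrθ, hbsq]; ring
    have hcontr : G1 ≤ (1 - θ) * G0 + β * Lt^2 * (γ^2 * Eb) := by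
      have hsum := Finset.sum_le_sum (fun i (_ : i ∈ Finset.univ) => hcontr_i i)
      have h6 : G1 ≤ (1 / (n:ℝ)) * ∑ i, ((1 - θ) * ‖g i t - gradient (f i) (x t)‖ ^ 2
          + β * (L i)^2 * (γ^2 * Eb)) := by
        rw [hG1]
        exact mul_le_mul_of_nonneg_left hsum (by positivity)
      refine h6.trans (le_of_eq ?_)
      rw [Finset.sum_add_distrib, ← Finset.mul_sum]
      have h7 : ∑ i : Fin n, β * (L i)^2 * (γ^2 * Eb) = (β * (γ^2 * Eb)) * ∑ i, (L i)^2 := by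
        rw [Finset.mul_sum]
        exact Finset.sum_congr rfl (fun i _ => by ring)
      rw [h7, hG0, hLt2]
      ring
    -- combine
    set q := γ / θ with hq
    have hqθ : q * θ = γ := by rw [hq]; field_simp
    have hqnn : 0 ≤ q := by rw [hq]; positivity
    have hcq : q * G1 ≤ q * ((1 - θ) * G0 + β * Lt^2 * (γ^2 * Eb)) :=
      mul_le_mul_of_nonneg_left hcontr hqnn
    -- coefficient inequalities
    have hE : Lf/2 * γ^2 + q * β * Lt^2 * γ^2 ≤ γ/2 := by
      have h2' : (Lf/2 * γ^2 + q * β * Lt^2 * γ^2) * θ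
          = Lf * γ^2 * θ / 2 + β * Lt^2 * γ^2 * γ := by
        rw [← hqθ]; ring
      have h3' : Lf * γ^2 * θ / 2 + β * Lt^2 * γ^2 * γ ≤ γ/2 * θ := by
        have k := mul_le_mul_of_nonneg_left hstep (by positivity : (0:ℝ) ≤ γ/2)
        linarith only [k]
      have := h2' ▸ h3'
      exact le_of_mul_le_mul_right this hθpos
    have hG : γ/2 + q * (1 - θ) ≤ (1 - γ * μ) * q := by
      have h3' : ((1 - γ * μ) * q - (γ/2 + q * (1 - θ))) * θ = γ * θ / 2 - γ^2 * μ := by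
        rw [← hqθ]; ring
      have h4' : 0 ≤ γ * θ / 2 - γ^2 * μ := by
        have k := mul_le_mul_of_nonneg_left hγμ hγ0.le
        linarith only [k]
      have h5' : (0:ℝ) * θ ≤ ((1 - γ * μ) * q - (γ/2 + q * (1 - θ))) * θ := by
        rw [zero_mul, h3']; linarith only [h4']
      have h6' := le_of_mul_le_mul_right h5' hθpos
      linarith only [h6']
    -- PL
    have hPL' : γ * μ * (F (x t) - F xstar) ≤ γ/2 * N := by
      have h := mul_le_mul_of_nonneg_left (hPL (x t)) (by positivity : (0:ℝ) ≤ γ * μ)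
      have heq : γ * μ * (1 / (2 * μ) * ‖gradient F (x t)‖ ^ 2) = γ/2 * N := by
        rw [hN]; field_simp
      linarith only [h, heq]
    -- final linear assembly
    rw [hΨ (t+1), hΨ t, ← hG0, ← hG1]
    have hE2 : Lf/2 * (γ^2 * Eb) + q * β * Lt^2 * (γ^2 * Eb) ≤ γ/2 * Eb := by
      have k := mul_le_mul_of_nonneg_right hE hEbnn
      linarith only [k]
    have hG2 : (γ/2 + q * (1 - θ)) * G0 ≤ (1 - γ * μ) * q * G0 :=
      mul_le_mul_of_nonneg_right hG hG0nn
    have hcq2 : q * G1 ≤ q * (1 - θ) * G0 + q * β * Lt^2 * (γ^2 * Eb) := by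
      linarith only [hcq]
    linarith only [hdesc, hcq2, hE2, hG2, hPL']
  -- induction
  have hμγ1 : 0 ≤ 1 - γ * μ := by linarith [hγμ, hθ1]
  intro T
  induction T with
  | zero => simp
  | succ T ih =>
    calc Ψ (T + 1) ≤ (1 - γ * μ) * Ψ T := key T
      _ ≤ (1 - γ * μ) * ((1 - γ * μ) ^ T * Ψ 0) := mul_le_mul_of_nonneg_left ih hμγ1
      _ = (1 - γ * μ) ^ (T + 1) * Ψ 0 := by ring
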